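/- (Fields–Ismail expansion with Jacobi-type inner polynomials, finite version.) Let γ, θ, μ be parameters such that no denominator Pochhammer symbol below vanishes, and let (a_m), (b_m) be sequences with b_m = 0 for m > M. Then for all z, w: Σ_{m=0}^{M} a_m b_m (zw)^m / m! = Σ_{n=0}^{M} ((-z)^n / (n! (γ+n)_n)) · (Σ_{r=0}^{M-n} ((μ)_{n+r} (θ)_{n+r} / (r! (γ+2n+1)_r)) b_{n+r} z^r) · (Σ_{s=0}^{n} ((-n)_s (n+γ)_s / (s! (μ)_s (θ)_s)) a_s w^s). -/

import Mathlib

open Finset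

/-- Pochhammer (rising factorial) symbol on the complex numbers. -/
noncomputable def pochC (a : ℂ) (n : ℕ) : ℂ := ∏ i ∈ Finset.range n, (a + i)

lemma pochC_zero (a : ℂ) : pochC a 0 = 1 := by simp [pochC]

lemma pochC_succ (a : ℂ) (n : ℕ) : pochC a (n + 1) = pochC a n * (a + n) := by
  simp [pochC, Finset.prod_range_succ]

lemma pochC_add (a : ℂ) (m n : ℕ) : pochC a (m + n) = pochC a m * pochC (a + m) n := by
  simp only [pochC, Finset.prod_range_add]
  congr 1
  apply Finset.prod_congr rfl
  intro i _
  push_cast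
  ring

lemma pochC_succ' (a : ℂ) (n : ℕ) : pochC a (n + 1) = a * pochC (a + 1) n := by
  have := pochC_add a 1 n
  simpa [pochC_succ, pochC_zero, add_comm 1 n] using this

lemma pochC_ne_zero_iff (a : ℂ) (n : ℕ) : pochC a n ≠ 0 ↔ ∀ i < n, a + i ≠ 0 := by
  rw [pochC, Finset.prod_ne_zero_iff]
  simp

lemma pochC_neg_nat_eq_zero {n s : ℕ} (h : n < s) : pochC (-(n : ℂ)) s = 0 := by
  apply Finset.prod_eq_zero (Finset.mem_range.mpr h)
  simp

lemma pochC_neg_nat {n s : ℕ} (h : s ≤ n) :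
    pochC (-(n : ℂ)) s * ((n - s).factorial : ℂ) = (-1) ^ s * (n.factorial : ℂ) := by
  induction s with
  | zero => simp [pochC_zero]
  | succ s ih =>
    have hs : s ≤ n := Nat.le_of_succ_le h
    have h1 : n - s = (n - (s + 1)) + 1 := by omega
    have ihs := ih hs
    rw [h1, Nat.factorial_succ] at ihs
    have h2 : (-(n : ℂ) + s) = -(((n - (s+1) : ℕ) : ℂ) + 1) := by
      have : ((n - (s+1) : ℕ) : ℂ) = (n : ℂ) - (s+1) := by
        push_cast [Nat.cast_sub h]; ring
      rw [this]; ring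
    rw [pochC_succ, h2]
    push_cast at ihs ⊢
    linear_combination (-1 : ℂ) * ihs

lemma pochC_one (a : ℂ) : pochC a 1 = a := by simp [pochC]

-- factorial lemma: k! * pochC (k+1) b = (k+b)!
lemma fact_mul_pochC (k b : ℕ) :
    (k.factorial : ℂ) * pochC ((k : ℂ) + 1) b = ((k + b).factorial : ℂ) := by
  induction b with
  | zero => simp [pochC_zero]
  | succ b ih =>
    rw [pochC_succ, ← mul_assoc, ih, ← Nat.add_assoc, Nat.factorial_succ]
    push_cast
    ring

-- Lemma B: finite-difference identity
lemma diffB : ∀ (q : ℕ) (p : ℕ) (x : ℂ), 1 ≤ p → (∀ j < p + q, x + (j : ℂ) ≠ 0) →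
    ∑ k ∈ Finset.range (q + 1), (-1 : ℂ) ^ k * (q.choose k : ℂ) / pochC (x + k) p
      = pochC (p : ℂ) q / pochC x (p + q) := by
  intro q
  induction q with
  | zero =>
    intro p x _ _
    simp [pochC_zero]
  | succ q ih =>
    intro p x hp hx
    have hx1 : ∀ j < p + q, (x + 1) + (j : ℂ) ≠ 0 := by
      intro j hj
      have h := hx (j + 1) (by omega)
      have : x + 1 + (j : ℂ) = x + ((j + 1 : ℕ) : ℂ) := by push_cast; ring
      rw [this]
      exact h
    have hx0 : ∀ j < p + q, x + (j : ℂ) ≠ 0 := fun j hj => hx j (by omega)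
    -- step: S_{q+1}(x) = S_q(x) - S_q(x+1)
    have step : ∑ k ∈ Finset.range (q + 2), (-1 : ℂ) ^ k * ((q+1).choose k : ℂ) / pochC (x + k) p
        = (∑ k ∈ Finset.range (q + 1), (-1 : ℂ) ^ k * (q.choose k : ℂ) / pochC (x + k) p)
          - ∑ k ∈ Finset.range (q + 1), (-1 : ℂ) ^ k * (q.choose k : ℂ) / pochC ((x+1) + k) p := by
      rw [Finset.sum_range_succ' (fun k => (-1 : ℂ) ^ k * ((q+1).choose k : ℂ) / pochC (x + k) p)]
      have hsplit : ∀ k ∈ Finset.range (q + 1),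
          (-1 : ℂ) ^ (k+1) * ((q+1).choose (k+1) : ℂ) / pochC (x + (k+1 : ℕ)) p
          = (-1 : ℂ) ^ (k+1) * ((q).choose k : ℂ) / pochC ((x+1) + k) p
            + (-1 : ℂ) ^ (k+1) * ((q).choose (k+1) : ℂ) / pochC ((x+1) + k) p := by
        intro k _
        have h1 : (x + ((k+1 : ℕ) : ℂ)) = (x + 1) + k := by push_cast; ring
        rw [h1, Nat.choose_succ_succ]
        push_cast
        ring
      rw [Finset.sum_congr rfl hsplit, Finset.sum_add_distrib]
      have e1 : ∑ k ∈ Finset.range (q+1), (-1 : ℂ) ^ (k+1) * ((q).choose k : ℂ) / pochC ((x+1) + k) p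
          = - ∑ k ∈ Finset.range (q+1), (-1 : ℂ) ^ k * ((q).choose k : ℂ) / pochC ((x+1) + k) p := by
        rw [← Finset.sum_neg_distrib]
        apply Finset.sum_congr rfl
        intro k _
        ring
      have e2 : ∑ k ∈ Finset.range (q+1), (-1 : ℂ) ^ (k+1) * ((q).choose (k+1) : ℂ) / pochC ((x+1) + k) p
          = (∑ k ∈ Finset.range (q+2), (-1 : ℂ) ^ k * ((q).choose k : ℂ) / pochC (x + k) p)
            - (-1 : ℂ) ^ 0 * ((q).choose 0 : ℂ) / pochC (x + (0:ℕ)) p := by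
        rw [Finset.sum_range_succ' (fun k => (-1 : ℂ) ^ k * ((q).choose k : ℂ) / pochC (x + k) p)]
        have : ∀ k ∈ Finset.range (q+1),
            (-1 : ℂ) ^ (k+1) * ((q).choose (k+1) : ℂ) / pochC (x + ((k+1:ℕ) : ℂ)) p
            = (-1 : ℂ) ^ (k+1) * ((q).choose (k+1) : ℂ) / pochC ((x+1) + k) p := by
          intro k _
          have h1 : (x + ((k+1 : ℕ) : ℂ)) = (x + 1) + k := by push_cast; ring
          rw [h1]
        rw [Finset.sum_congr rfl this]
        ring
      have e3 : ∑ k ∈ Finset.range (q+2), (-1 : ℂ) ^ k * ((q).choose k : ℂ) / pochC (x + k) p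
          = ∑ k ∈ Finset.range (q+1), (-1 : ℂ) ^ k * ((q).choose k : ℂ) / pochC (x + k) p := by
        rw [Finset.sum_range_succ]
        simp [Nat.choose_succ_self]
      rw [e1, e2, e3]
      simp only [Nat.choose_zero_right, Nat.cast_one, pow_zero, Nat.cast_zero, add_zero]
      ring
    rw [step, ih p x hp hx0, ih p (x+1) hp hx1]
    -- now algebra
    have hX : pochC x (p + q) ≠ 0 := by
      rw [pochC_ne_zero_iff]; intro i hi; exact hx i (by omega)
    have hX' : pochC (x+1) (p + q) ≠ 0 := by
      rw [pochC_ne_zero_iff]; intro i hi; exact hx1 i (by omega)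
    have hx00 : x ≠ 0 := by
      have := hx 0 (by omega); simpa using this
    have hY1 : pochC x (p + q + 1) = pochC x (p + q) * (x + (p + q : ℕ)) := pochC_succ x (p+q)
    have hY2 : pochC x (p + q + 1) = x * pochC (x + 1) (p + q) := pochC_succ' x (p+q)
    have hP : pochC (p : ℂ) (q + 1) = pochC (p : ℂ) q * ((p : ℂ) + q) := pochC_succ _ q
    have hpq : p + (q + 1) = (p + q) + 1 := by omega
    rw [hpq, hP]
    rw [div_sub_div _ _ hX hX', div_eq_div_iff (by exact mul_ne_zero hX hX')
      (by rw [hY2]; exact mul_ne_zero hx00 hX')]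
    push_cast at hY1 ⊢
    linear_combination (pochC (p:ℂ) q * pochC (x+1) (p+q)) * hY1
      - (pochC (p:ℂ) q * pochC x (p+q)) * hY2

lemma zsum (N : ℕ) (hN : 1 ≤ N) (c : ℂ) (hc : ∀ j ≤ 2*N, c + (j:ℂ) ≠ 0) :
    ∑ k ∈ Finset.range (N+1), (-1:ℂ)^k * (c + 2*(k:ℂ)) /
      ((k.factorial : ℂ) * ((N-k).factorial : ℂ) * pochC (c+(k:ℂ)) (N+1)) = 0 := by
  have hc1 : ∀ j < N + N, (c + 1) + (j:ℂ) ≠ 0 := by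
    intro j hj
    have h := hc (j+1) (by omega)
    rw [show (c+1)+(j:ℂ) = c + ((j+1:ℕ):ℂ) by push_cast; ring]
    exact h
  have hc2 : ∀ j < (N+1) + (N-1), (c + 1) + (j:ℂ) ≠ 0 := by
    intro j hj; exact hc1 j (by omega)
  have hB1 := diffB N N (c+1) hN hc1
  have hB2 := diffB (N-1) (N+1) (c+1) (by omega) hc2
  have hrg : Finset.range (N-1+1) = Finset.range N := by congr 1; omega
  rw [hrg] at hB2
  have hNf : (N.factorial : ℂ) ≠ 0 := Nat.cast_ne_zero.mpr (Nat.factorial_ne_zero N)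
  have hNm1f : ((N-1).factorial : ℂ) ≠ 0 := Nat.cast_ne_zero.mpr (Nat.factorial_ne_zero _)
  have hNne : (N:ℂ) ≠ 0 := Nat.cast_ne_zero.mpr (by omega)
  have hNfe : (N.factorial : ℂ) = (N:ℂ) * ((N-1).factorial : ℂ) := by
    exact_mod_cast congrArg (Nat.cast : ℕ → ℂ) (Nat.mul_factorial_pred (by omega)).symm
  set u : ℕ → ℂ := fun k => ((-1:ℂ)^k * (N.choose k : ℂ) / pochC ((c+1) + (k:ℂ)) N) / (N.factorial : ℂ) with hu
  set v : ℕ → ℂ := fun k => ((-1:ℂ)^k * (N.choose k : ℂ) * (k:ℂ)) /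
      ((N.factorial:ℂ) * pochC (c+(k:ℂ)) (N+1)) with hv
  have hterm : ∀ k ∈ Finset.range (N+1),
      (-1:ℂ)^k * (c + 2*(k:ℂ)) /
        ((k.factorial : ℂ) * ((N-k).factorial : ℂ) * pochC (c+(k:ℂ)) (N+1)) = u k + v k := by
    intro k hk
    have hkN : k ≤ N := by simpa [Nat.lt_succ_iff] using hk
    have hck : c + (k:ℂ) ≠ 0 := hc k (by omega)
    have hsp : pochC (c+(k:ℂ)) (N+1) = (c+(k:ℂ)) * pochC ((c+1) + (k:ℂ)) N := by
      rw [pochC_succ']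
      ring_nf
    have hchoose : ((N.choose k : ℂ)) * (k.factorial : ℂ) * ((N-k).factorial : ℂ)
        = (N.factorial : ℂ) := by
      exact_mod_cast congrArg (Nat.cast : ℕ → ℂ)
        (Nat.choose_mul_factorial_mul_factorial hkN)
    have hpne : pochC ((c+1) + (k:ℂ)) N ≠ 0 := by
      rw [pochC_ne_zero_iff]
      intro i hi
      have h := hc (k+1+i) (by omega)
      rw [show (c+1)+(k:ℂ)+(i:ℂ) = c + ((k+1+i:ℕ):ℂ) by push_cast; ring]
      exact h
    have hkf : (k.factorial : ℂ) ≠ 0 := Nat.cast_ne_zero.mpr (Nat.factorial_ne_zero k)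
    have hNkf : ((N-k).factorial : ℂ) ≠ 0 := Nat.cast_ne_zero.mpr (Nat.factorial_ne_zero _)
    have hQne : pochC (c+(k:ℂ)) (N+1) ≠ 0 := by
      rw [hsp]; exact mul_ne_zero hck hpne
    have step1 : (-1:ℂ)^k * (c + 2*(k:ℂ)) /
        ((k.factorial : ℂ) * ((N-k).factorial : ℂ) * pochC (c+(k:ℂ)) (N+1))
        = (-1:ℂ)^k * (N.choose k : ℂ) * (c + 2*(k:ℂ)) /
          ((N.factorial : ℂ) * pochC (c+(k:ℂ)) (N+1)) := by
      rw [div_eq_div_iff (by exact mul_ne_zero (mul_ne_zero hkf hNkf) hQne)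
        (mul_ne_zero hNf hQne)]
      linear_combination (-(-1:ℂ)^k * (c + 2*(k:ℂ)) * pochC (c+(k:ℂ)) (N+1)) * hchoose
    rw [step1, hu, hv]
    simp only
    rw [hsp]
    field_simp
    ring
  rw [Finset.sum_congr rfl hterm, Finset.sum_add_distrib]
  have hSu : ∑ k ∈ Finset.range (N+1), u k
      = (pochC (N : ℂ) N / pochC (c+1) (N+N)) / (N.factorial : ℂ) := by
    rw [hu, ← Finset.sum_div, hB1]
  have hv0 : v 0 = 0 := by simp [hv]
  have hSv : ∑ k ∈ Finset.range (N+1), v k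
      = -((pochC (((N+1 : ℕ)) : ℂ) (N-1) / pochC (c+1) ((N+1)+(N-1))) / ((N-1).factorial : ℂ)) := by
    rw [Finset.sum_range_succ' v, hv0, add_zero]
    have hvj : ∀ j ∈ Finset.range N, v (j+1)
        = -((((-1:ℂ)^j * ((N-1).choose j : ℂ) / pochC ((c+1) + (j:ℂ)) (N+1))) / ((N-1).factorial : ℂ)) := by
      intro j hjr
      have hj : j < N := Finset.mem_range.mp hjr
      have hcm : N.choose (j+1) * (j+1) = N * ((N-1).choose j) := by
        have h := Nat.add_one_mul_choose_eq (N-1) j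
        rw [show N-1+1 = N by omega] at h
        simpa [Nat.succ_eq_add_one, mul_comm, mul_left_comm] using h.symm
      have hcmC : (N.choose (j+1) : ℂ) * ((j:ℂ)+1) = (N:ℂ) * ((N-1).choose j : ℂ) := by
        have := congrArg (Nat.cast : ℕ → ℂ) hcm
        push_cast at this
        exact this
      have hshift : pochC (c+((j:ℂ)+1)) (N+1) = pochC ((c+1) + (j:ℂ)) (N+1) := by
        congr 1
        ring
      have hpne2 : pochC ((c+1) + (j:ℂ)) (N+1) ≠ 0 := by
        rw [pochC_ne_zero_iff]
        intro i hi
        have h := hc (j+1+i) (by omega)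
        rw [show (c+1)+(j:ℂ)+(i:ℂ) = c + ((j+1+i:ℕ):ℂ) by push_cast; ring]
        exact h
      rw [hv]
      simp only
      rw [show ((j+1:ℕ):ℂ) = (j:ℂ)+1 by push_cast; ring]
      rw [hshift, hNfe]
      field_simp
      linear_combination (-(-1:ℂ)^j) * hcmC
    rw [Finset.sum_congr rfl hvj]
    rw [Finset.sum_neg_distrib, ← Finset.sum_div, hB2]
  rw [hSu, hSv]
  rw [show (N+1)+(N-1) = N+N by omega]
  have E1 : ((N-1).factorial : ℂ) * pochC ((N:ℂ)) N = (((N-1)+N).factorial : ℂ) := by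
    have h := fact_mul_pochC (N-1) N
    rw [show (((N-1):ℕ):ℂ) + 1 = (N:ℂ) by
      push_cast [Nat.cast_sub hN]; ring] at h
    exact h
  have E2 : (N.factorial : ℂ) * pochC ((N:ℂ)+1) (N-1) = (((N-1)+N).factorial : ℂ) := by
    have h := fact_mul_pochC N (N-1)
    rw [show N + (N-1) = (N-1)+N by omega] at h
    exact h
  have hA : pochC ((N:ℂ)) N = (N:ℂ) * pochC ((N:ℂ)+1) (N-1) := by
    have h0 : ((N-1).factorial : ℂ) * (pochC ((N:ℂ)) N - (N:ℂ) * pochC ((N:ℂ)+1) (N-1)) = 0 := by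
      linear_combination E1 - E2 + pochC ((N:ℂ)+1) (N-1) * hNfe
    rcases mul_eq_zero.mp h0 with h | h
    · exact absurd h hNm1f
    · exact sub_eq_zero.mp h
  rw [show (((N+1:ℕ)):ℂ) = (N:ℂ)+1 by push_cast; ring, hA, hNfe]
  have hD : pochC (c+1) (N+N) ≠ 0 := by
    rw [pochC_ne_zero_iff]
    intro i hi
    exact hc1 i (by omega)
  field_simp [hD]
  ring

lemma key0 (s m : ℕ) (hsm : s < m) (x : ℂ) (hx : ∀ j ≤ 2*m, x + (j:ℂ) ≠ 0) :
    ∑ n ∈ Finset.Icc s m, (-1:ℂ)^n * pochC (-(n:ℂ)) s * pochC (x+(n:ℂ)) s /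
      ((n.factorial : ℂ) * pochC (x+(n:ℂ)) n * ((m-n).factorial : ℂ) *
        pochC (x+2*(n:ℂ)+1) (m-n)) = 0 := by
  set N := m - s with hNdef
  have hN : 1 ≤ N := by omega
  set c : ℂ := x + 2*(s:ℂ) with hcdef
  have hc : ∀ j ≤ 2*N, c + (j:ℂ) ≠ 0 := by
    intro j hj
    have h := hx (2*s + j) (by omega)
    rw [hcdef, show x + 2*(s:ℂ) + (j:ℂ) = x + ((2*s+j : ℕ):ℂ) by push_cast; ring]
    exact h
  have hreindex : ∑ n ∈ Finset.Icc s m, (-1:ℂ)^n * pochC (-(n:ℂ)) s * pochC (x+(n:ℂ)) s /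
      ((n.factorial : ℂ) * pochC (x+(n:ℂ)) n * ((m-n).factorial : ℂ) *
        pochC (x+2*(n:ℂ)+1) (m-n))
      = ∑ k ∈ Finset.range (N+1), (-1:ℂ)^(s+k) * pochC (-((s+k:ℕ):ℂ)) s * pochC (x+((s+k:ℕ):ℂ)) s /
      (((s+k).factorial : ℂ) * pochC (x+((s+k:ℕ):ℂ)) (s+k) * ((m-(s+k)).factorial : ℂ) *
        pochC (x+2*((s+k:ℕ):ℂ)+1) (m-(s+k))) := by
    rw [← Finset.Ico_add_one_right_eq_Icc, Finset.sum_Ico_eq_sum_range]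
    rw [show m + 1 - s = N + 1 by omega]
  rw [hreindex]
  have hterm : ∀ k ∈ Finset.range (N+1),
      (-1:ℂ)^(s+k) * pochC (-((s+k:ℕ):ℂ)) s * pochC (x+((s+k:ℕ):ℂ)) s /
      (((s+k).factorial : ℂ) * pochC (x+((s+k:ℕ):ℂ)) (s+k) * ((m-(s+k)).factorial : ℂ) *
        pochC (x+2*((s+k:ℕ):ℂ)+1) (m-(s+k)))
      = (-1:ℂ)^k * (c + 2*(k:ℂ)) /
      ((k.factorial : ℂ) * ((N-k).factorial : ℂ) * pochC (c+(k:ℂ)) (N+1)) := by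
    intro k hk
    have hkN : k ≤ N := by simpa [Nat.lt_succ_iff] using hk
    set n := s + k with hndef
    have hnm : n ≤ m := by omega
    -- negative pochhammer
    have hneg : pochC (-(n : ℂ)) s * (k.factorial : ℂ) = (-1:ℂ) ^ s * (n.factorial : ℂ) := by
      have h := pochC_neg_nat (show s ≤ n by omega)
      rwa [show n - s = k by omega] at h
    -- REL : pochC (x+n) n * (x+2n) * pochC (x+2n+1) (m-n) = pochC (x+n) s * pochC (c+k) (N+1)
    have hR1 : pochC (x+(n:ℂ)) (m+1)
        = pochC (x+(n:ℂ)) n * (x+2*(n:ℂ)) * pochC (x+2*(n:ℂ)+1) (m-n) := by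
      rw [show m + 1 = n + (1 + (m-n)) by omega, pochC_add (x+(n:ℂ)) n (1+(m-n)),
        pochC_add (x+(n:ℂ)+(n:ℂ)) 1 (m-n), pochC_one]
      rw [show x + (n:ℂ) + (n:ℂ) = x + 2*(n:ℂ) by ring]
      rw [show x + 2*(n:ℂ) + ((1:ℕ):ℂ) = x + 2*(n:ℂ) + 1 by norm_num]
      ring
    have hR2 : pochC (x+(n:ℂ)) (m+1)
        = pochC (x+(n:ℂ)) s * pochC (c+(k:ℂ)) (N+1) := by
      rw [show m + 1 = s + (N+1) by omega, pochC_add (x+(n:ℂ)) s (N+1)]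
      rw [show x + (n:ℂ) + (s:ℂ) = c + (k:ℂ) by rw [hcdef, hndef]; push_cast; ring]
    have hREL : pochC (x+(n:ℂ)) n * (x+2*(n:ℂ)) * pochC (x+2*(n:ℂ)+1) (m-n)
        = pochC (x+(n:ℂ)) s * pochC (c+(k:ℂ)) (N+1) := by
      rw [← hR1, ← hR2]
    -- nonvanishing
    have hPn : pochC (x+(n:ℂ)) n ≠ 0 := by
      rw [pochC_ne_zero_iff]
      intro i hi
      have h := hx (n+i) (by omega)
      rw [show x+(n:ℂ)+(i:ℂ) = x + ((n+i:ℕ):ℂ) by push_cast; ring]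
      exact h
    have hPr : pochC (x+2*(n:ℂ)+1) (m-n) ≠ 0 := by
      rw [pochC_ne_zero_iff]
      intro i hi
      have h := hx (2*n+1+i) (by omega)
      rw [show x+2*(n:ℂ)+1+(i:ℂ) = x + ((2*n+1+i:ℕ):ℂ) by push_cast; ring]
      exact h
    have hQ : pochC (c+(k:ℂ)) (N+1) ≠ 0 := by
      rw [pochC_ne_zero_iff]
      intro i hi
      have h := hc (k+i) (by omega)
      rw [show c+(k:ℂ)+(i:ℂ) = c + ((k+i:ℕ):ℂ) by push_cast; ring]
      exact h
    have hnf : (n.factorial : ℂ) ≠ 0 := Nat.cast_ne_zero.mpr (Nat.factorial_ne_zero _)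
    have hkf : (k.factorial : ℂ) ≠ 0 := Nat.cast_ne_zero.mpr (Nat.factorial_ne_zero _)
    have hNkf : ((N-k).factorial : ℂ) ≠ 0 := Nat.cast_ne_zero.mpr (Nat.factorial_ne_zero _)
    rw [show m - n = N - k by omega] at hREL hPr ⊢
    rw [show c + 2*(k:ℂ) = x + 2*(n:ℂ) by rw [hcdef, hndef]; push_cast; ring]
    have hsq : ((-1:ℂ))^s * ((-1:ℂ))^s = 1 := by
      rw [← pow_add, ← two_mul, pow_mul]
      norm_num
    rw [div_eq_div_iff
      (by exact mul_ne_zero (mul_ne_zero (mul_ne_zero hnf hPn) hNkf) hPr)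
      (by exact mul_ne_zero (mul_ne_zero hkf hNkf) hQ)]
    rw [pow_add]
    linear_combination ((-1:ℂ)^s * (-1:ℂ)^k * pochC (x+(n:ℂ)) s * ((N-k).factorial:ℂ) * pochC (c+(k:ℂ)) (N+1)) * hneg
      + ((-1:ℂ)^k * (n.factorial:ℂ) * pochC (x+(n:ℂ)) s * ((N-k).factorial:ℂ) * pochC (c+(k:ℂ)) (N+1)) * hsq
      - ((-1:ℂ)^k * (n.factorial:ℂ) * ((N-k).factorial:ℂ)) * hREL
  rw [Finset.sum_congr rfl hterm]
  exact zsum N hN c hc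

/-- polynomial whose eval at x is pochC (x+a) t -/
noncomputable def pochP (a : ℂ) (t : ℕ) : Polynomial ℂ :=
  ∏ i ∈ Finset.range t, (Polynomial.X + Polynomial.C (a + i))

lemma pochP_eval (a : ℂ) (t : ℕ) (x : ℂ) : (pochP a t).eval x = pochC (x + a) t := by
  rw [pochP, Polynomial.eval_prod, pochC]
  apply Finset.prod_congr rfl
  intro i _
  simp
  ring

lemma key (s m : ℕ) (hsm : s < m) (γ : ℂ)
    (h1 : ∀ n, s ≤ n → n ≤ m → pochC (γ+(n:ℂ)) n ≠ 0)
    (h2 : ∀ n, s ≤ n → n ≤ m → pochC (γ+2*(n:ℂ)+1) (m-n) ≠ 0) :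
    ∑ n ∈ Finset.Icc s m, (-1:ℂ)^n * pochC (-(n:ℂ)) s * pochC (γ+(n:ℂ)) s /
      ((n.factorial : ℂ) * pochC (γ+(n:ℂ)) n * ((m-n).factorial : ℂ) *
        pochC (γ+2*(n:ℂ)+1) (m-n)) = 0 := by
  set coef : ℕ → ℂ := fun n => (-1:ℂ)^n * pochC (-(n:ℂ)) s /
      ((n.factorial : ℂ) * ((m-n).factorial : ℂ)) with hcoef
  set F : Polynomial ℂ := ∑ n ∈ Finset.Icc s m, Polynomial.C (coef n) * pochP (n:ℂ) s *
      ∏ t ∈ (Finset.Icc s m).erase n, (pochP (t:ℂ) t * pochP (2*(t:ℂ)+1) (m-t)) with hF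
  have evalF : ∀ x : ℂ, (∀ n ∈ Finset.Icc s m, pochC (x+(n:ℂ)) n ≠ 0 ∧ pochC (x+2*(n:ℂ)+1) (m-n) ≠ 0) →
      F.eval x = (∑ n ∈ Finset.Icc s m, (-1:ℂ)^n * pochC (-(n:ℂ)) s * pochC (x+(n:ℂ)) s /
        ((n.factorial : ℂ) * pochC (x+(n:ℂ)) n * ((m-n).factorial : ℂ) *
          pochC (x+2*(n:ℂ)+1) (m-n)))
        * ∏ t ∈ Finset.Icc s m, (pochC (x+(t:ℂ)) t * pochC (x+2*(t:ℂ)+1) (m-t)) := by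
    intro x hx
    rw [hF, Polynomial.eval_finset_sum, Finset.sum_mul]
    apply Finset.sum_congr rfl
    intro n hn
    rw [Polynomial.eval_mul, Polynomial.eval_mul, Polynomial.eval_C, Polynomial.eval_prod]
    have heval : ∀ t ∈ (Finset.Icc s m).erase n,
        ((pochP (t:ℂ) t * pochP (2*(t:ℂ)+1) (m-t)).eval x)
        = pochC (x+(t:ℂ)) t * pochC (x+2*(t:ℂ)+1) (m-t) := by
      intro t _
      rw [Polynomial.eval_mul, pochP_eval, pochP_eval, add_assoc]
    rw [Finset.prod_congr rfl heval, pochP_eval]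
    rw [← Finset.mul_prod_erase _ _ hn]
    obtain ⟨hn1, hn2⟩ := hx n hn
    have hnf : (n.factorial : ℂ) ≠ 0 := Nat.cast_ne_zero.mpr (Nat.factorial_ne_zero _)
    have hmnf : ((m-n).factorial : ℂ) ≠ 0 := Nat.cast_ne_zero.mpr (Nat.factorial_ne_zero _)
    rw [hcoef]
    simp only
    have hn2' : pochC (1 + (n:ℂ)*2 + x) (m-n) ≠ 0 := by
      rwa [show (1 + (n:ℂ)*2 + x) = x+2*(n:ℂ)+1 by ring]
    field_simp
    ring_nf
    rw [mul_inv_cancel_right₀ hn2']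
  -- generic vanishing
  have hroot : {x : ℂ | ∀ j ≤ 2*m, x + (j:ℂ) ≠ 0} ⊆ {x : ℂ | F.IsRoot x} := by
    intro x hx
    have hz := key0 s m hsm x hx
    have hcond : ∀ n ∈ Finset.Icc s m, pochC (x+(n:ℂ)) n ≠ 0 ∧ pochC (x+2*(n:ℂ)+1) (m-n) ≠ 0 := by
      intro n hn
      obtain ⟨hns, hnm⟩ := Finset.mem_Icc.mp hn
      constructor
      · rw [pochC_ne_zero_iff]
        intro i hi
        have h := hx (n+i) (by omega)
        rw [show x+(n:ℂ)+(i:ℂ) = x + ((n+i:ℕ):ℂ) by push_cast; ring]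
        exact h
      · rw [pochC_ne_zero_iff]
        intro i hi
        have h := hx (2*n+1+i) (by omega)
        rw [show x+2*(n:ℂ)+1+(i:ℂ) = x + ((2*n+1+i:ℕ):ℂ) by push_cast; ring]
        exact h
    show F.IsRoot x
    rw [Polynomial.IsRoot, evalF x hcond, hz, zero_mul]
  have hinf : {x : ℂ | F.IsRoot x}.Infinite := by
    apply Set.Infinite.mono hroot
    have hfin : (Set.range fun j : Finset.range (2*m+1) => -((j:ℕ):ℂ)).Finite :=
      Set.finite_range _
    have hsub : {x : ℂ | ∀ j ≤ 2*m, x + (j:ℂ) ≠ 0} ⊇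
        (Set.range fun j : Finset.range (2*m+1) => -((j:ℕ):ℂ))ᶜ := by
      intro x hxc
      intro j hj
      intro heq
      apply hxc
      refine ⟨⟨j, Finset.mem_range.mpr (by omega)⟩, ?_⟩
      simp only
      linear_combination -heq
    exact Set.Infinite.mono hsub (Set.Finite.infinite_compl hfin)
  have hF0 : F = 0 := Polynomial.eq_zero_of_infinite_isRoot F hinf
  have hcondγ : ∀ n ∈ Finset.Icc s m, pochC (γ+(n:ℂ)) n ≠ 0 ∧ pochC (γ+2*(n:ℂ)+1) (m-n) ≠ 0 := by
    intro n hn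
    obtain ⟨hns, hnm⟩ := Finset.mem_Icc.mp hn
    exact ⟨h1 n hns hnm, h2 n hns hnm⟩
  have hev := evalF γ hcondγ
  rw [hF0] at hev
  simp only [Polynomial.eval_zero] at hev
  have hprod : ∏ t ∈ Finset.Icc s m, (pochC (γ+(t:ℂ)) t * pochC (γ+2*(t:ℂ)+1) (m-t)) ≠ 0 := by
    rw [Finset.prod_ne_zero_iff]
    intro t ht
    obtain ⟨h1', h2'⟩ := hcondγ t ht
    exact mul_ne_zero h1' h2'
  rcases mul_eq_zero.mp hev.symm with h | h
  · exact h
  · exact absurd h hprod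

lemma swap_nr (M : ℕ) (h : ℕ → ℕ → ℂ) (h0 : ∀ n r, n ≤ M → r ≤ M → M < n + r → h n r = 0) :
    ∑ n ∈ Finset.range (M+1), ∑ r ∈ Finset.range (M+1), h n r
      = ∑ p ∈ Finset.range (M+1), ∑ n ∈ Finset.range (p+1), h n (p - n) := by
  rw [← Finset.sum_product', Finset.sum_sigma']
  rw [show (Finset.range (M+1) ×ˢ Finset.range (M+1)) =
    ((Finset.range (M+1) ×ˢ Finset.range (M+1)).filter (fun p => p.1 + p.2 ≤ M)) ∪
    ((Finset.range (M+1) ×ˢ Finset.range (M+1)).filter (fun p => ¬ (p.1 + p.2 ≤ M)))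
    from (Finset.filter_union_filter_not_eq _ _).symm]
  rw [Finset.sum_union (Finset.disjoint_filter_filter_not _ _ _)]
  have hz : ∑ p ∈ ((Finset.range (M+1) ×ˢ Finset.range (M+1)).filter (fun p => ¬ (p.1 + p.2 ≤ M))),
      h p.1 p.2 = 0 := by
    apply Finset.sum_eq_zero
    intro p hp
    rw [Finset.mem_filter, Finset.mem_product, Finset.mem_range, Finset.mem_range] at hp
    exact h0 p.1 p.2 (by omega) (by omega) (by omega)
  rw [hz, add_zero]
  apply Finset.sum_nbij' (i := fun p => (⟨p.1 + p.2, p.1⟩ : Σ _ : ℕ, ℕ))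
    (j := fun q => ((q.2, q.1 - q.2) : ℕ × ℕ))
  · intro p hp
    rw [Finset.mem_filter, Finset.mem_product, Finset.mem_range, Finset.mem_range] at hp
    rw [Finset.mem_sigma]
    dsimp only
    rw [Finset.mem_range, Finset.mem_range]
    omega
  · intro q hq
    rw [Finset.mem_sigma, Finset.mem_range, Finset.mem_range] at hq
    rw [Finset.mem_filter, Finset.mem_product, Finset.mem_range, Finset.mem_range]
    omega
  · intro p hp
    rw [Finset.mem_filter, Finset.mem_product] at hp
    simp only
    congr <;> omega
  · intro q hq
    rw [Finset.mem_sigma, Finset.mem_range, Finset.mem_range] at hq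
    simp only
    congr <;> omega
  · intro p hp
    simp only
    congr 1
    omega

/-- Fields–Ismail expansion (formula (1.3)), with Jacobi-type inner polynomials, finite
version for finitely supported `b`. -/
theorem fields_ismail_jacobi_finite (γ θ μ : ℂ) (M : ℕ)
    (hγ₁ : ∀ n ≤ M, pochC (γ + n) n ≠ 0)
    (hγ₂ : ∀ n ≤ M, ∀ r ≤ M - n, pochC (γ + 2 * n + 1) r ≠ 0)
    (hμ : ∀ s ≤ M, pochC μ s ≠ 0) (hθ : ∀ s ≤ M, pochC θ s ≠ 0)
    (a b : ℕ → ℂ) (hb : ∀ m, M < m → b m = 0) (z w : ℂ) :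
    (∑ m ∈ Finset.range (M + 1), a m * b m * (z * w) ^ m / (m.factorial : ℂ)) =
      ∑ n ∈ Finset.range (M + 1),
        ((-z) ^ n / ((n.factorial : ℂ) * pochC (γ + n) n)) *
        (∑ r ∈ Finset.range (M - n + 1),
          (pochC μ (n + r) * pochC θ (n + r) / ((r.factorial : ℂ) * pochC (γ + 2 * n + 1) r)) *
            b (n + r) * z ^ r) *
        (∑ s ∈ Finset.range (n + 1),
          (pochC (-(n : ℂ)) s * pochC ((n : ℂ) + γ) s /
            ((s.factorial : ℂ) * pochC μ s * pochC θ s)) * a s * w ^ s) := by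
  set A : ℕ → ℂ := fun n => (-z) ^ n / ((n.factorial : ℂ) * pochC (γ + n) n) with hA
  set B : ℕ → ℕ → ℂ := fun n r =>
    (pochC μ (n + r) * pochC θ (n + r) / ((r.factorial : ℂ) * pochC (γ + 2 * n + 1) r)) *
      b (n + r) * z ^ r with hB
  set Cc : ℕ → ℕ → ℂ := fun n s =>
    (pochC (-(n : ℂ)) s * pochC ((n : ℂ) + γ) s /
      ((s.factorial : ℂ) * pochC μ s * pochC θ s)) * a s * w ^ s with hCc
  -- Step A : extend inner ranges
  have stepA : ∀ n ∈ Finset.range (M+1),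
      A n * (∑ r ∈ Finset.range (M - n + 1), B n r) * (∑ s ∈ Finset.range (n + 1), Cc n s)
      = A n * (∑ r ∈ Finset.range (M + 1), B n r) * (∑ s ∈ Finset.range (M + 1), Cc n s) := by
    intro n hn
    have hnM : n ≤ M := by simpa [Nat.lt_succ_iff] using hn
    have e1 : ∑ r ∈ Finset.range (M - n + 1), B n r = ∑ r ∈ Finset.range (M + 1), B n r := by
      apply Finset.sum_subset (Finset.range_subset_range.mpr (by omega))
      intro r _ hr
      rw [Finset.mem_range] at hr
      have : b (n + r) = 0 := hb _ (by omega)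
      simp [hB, this]
    have e2 : ∑ s ∈ Finset.range (n + 1), Cc n s = ∑ s ∈ Finset.range (M + 1), Cc n s := by
      apply Finset.sum_subset (Finset.range_subset_range.mpr (by omega))
      intro s _ hs
      rw [Finset.mem_range] at hs
      have : pochC (-(n : ℂ)) s = 0 := pochC_neg_nat_eq_zero (by omega)
      simp [hCc, this]
    rw [e1, e2]
  rw [Finset.sum_congr rfl stepA]
  -- Step B : triple sum
  have stepB : ∀ n ∈ Finset.range (M+1),
      A n * (∑ r ∈ Finset.range (M + 1), B n r) * (∑ s ∈ Finset.range (M + 1), Cc n s)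
      = ∑ r ∈ Finset.range (M + 1), (A n * B n r * ∑ s ∈ Finset.range (M + 1), Cc n s) := by
    intro n _
    rw [show A n * (∑ r ∈ Finset.range (M + 1), B n r)
        = ∑ r ∈ Finset.range (M + 1), A n * B n r from Finset.mul_sum _ _ _,
      Finset.sum_mul]
  rw [Finset.sum_congr rfl stepB]
  -- Step C : swap (n,r) → (p,n)
  rw [swap_nr M (fun n r => A n * B n r * ∑ s ∈ Finset.range (M + 1), Cc n s) (by
    intro n r hn hr hnr
    have : b (n + r) = 0 := hb _ (by omega)
    simp [hB, this])]
  -- Step D : per-p evaluation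
  apply Finset.sum_congr rfl
  intro p hp
  have hpM : p ≤ M := by simpa [Nat.lt_succ_iff] using hp
  -- push into s-sum and swap n,s
  have stepD1 : ∀ n ∈ Finset.range (p+1),
      A n * B n (p - n) * (∑ s ∈ Finset.range (M + 1), Cc n s)
      = ∑ s ∈ Finset.range (M + 1), A n * B n (p - n) * Cc n s := by
    intro n _
    rw [Finset.mul_sum]
  rw [Finset.sum_congr rfl stepD1, Finset.sum_comm]
  -- restrict s to range (p+1)
  have stepD2 : ∑ s ∈ Finset.range (p+1), (∑ n ∈ Finset.range (p+1), A n * B n (p - n) * Cc n s)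
      = ∑ s ∈ Finset.range (M+1), (∑ n ∈ Finset.range (p+1), A n * B n (p - n) * Cc n s) := by
    apply Finset.sum_subset (Finset.range_subset_range.mpr (by omega))
    intro s _ hs
    rw [Finset.mem_range] at hs
    apply Finset.sum_eq_zero
    intro n hn
    rw [Finset.mem_range] at hn
    have : pochC (-(n : ℂ)) s = 0 := pochC_neg_nat_eq_zero (by omega)
    simp [hCc, this]
  rw [← stepD2]
  -- restrict n to Icc s p
  have stepD3 : ∀ s ∈ Finset.range (p+1),
      ∑ n ∈ Finset.range (p+1), A n * B n (p - n) * Cc n s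
      = ∑ n ∈ Finset.Icc s p, A n * B n (p - n) * Cc n s := by
    intro s hs
    rw [Finset.mem_range] at hs
    symm
    apply Finset.sum_subset
    · intro n hn
      rw [Finset.mem_Icc] at hn
      rw [Finset.mem_range]
      omega
    · intro n hn hn2
      rw [Finset.mem_range] at hn
      rw [Finset.mem_Icc] at hn2
      have : pochC (-(n : ℂ)) s = 0 := pochC_neg_nat_eq_zero (by omega)
      simp [hCc, this]
  rw [Finset.sum_congr rfl stepD3]
  -- evaluate inner sum : diagonal
  have stepD4 : ∀ s ∈ Finset.range (p+1),
      ∑ n ∈ Finset.Icc s p, A n * B n (p - n) * Cc n s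
      = if s = p then a p * b p * (z*w) ^ p / (p.factorial : ℂ) else 0 := by
    intro s hs
    rw [Finset.mem_range, Nat.lt_succ_iff] at hs
    by_cases hsp : s = p
    · subst hsp
      rw [Finset.Icc_self, Finset.sum_singleton, if_pos rfl]
      have hneg : pochC (-(s : ℂ)) s = (-1:ℂ)^s * (s.factorial : ℂ) := by
        have h := pochC_neg_nat (le_refl s)
        simpa using h
      have hsq : ((-1:ℂ))^s * ((-1:ℂ))^s = 1 := by
        rw [← pow_add, ← two_mul, pow_mul]; norm_num
      have h1 : pochC (γ + (s:ℂ)) s ≠ 0 := hγ₁ s hpM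
      have h2 : pochC μ s ≠ 0 := hμ s hpM
      have h3 : pochC θ s ≠ 0 := hθ s hpM
      have hsf : (s.factorial : ℂ) ≠ 0 := Nat.cast_ne_zero.mpr (Nat.factorial_ne_zero _)
      rw [hA, hB, hCc]
      simp only [Nat.sub_self, Nat.add_zero, pochC_zero, Nat.factorial_zero, pow_zero]
      rw [hneg]
      rw [show ((s:ℂ) + γ) = γ + (s:ℂ) by ring]
      rw [show (-z)^s = (-1:ℂ)^s * z^s by rw [neg_pow]]
      rw [mul_pow]
      field_simp
      linear_combination (z^s * b s * a s * w^s) * hsq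
    · have hslt : s < p := by omega
      rw [if_neg hsp]
      have hfac : ∀ n ∈ Finset.Icc s p, A n * B n (p - n) * Cc n s
          = (pochC μ p * pochC θ p * b p * z ^ p * a s * w ^ s /
              ((s.factorial : ℂ) * pochC μ s * pochC θ s)) *
            ((-1:ℂ)^n * pochC (-(n:ℂ)) s * pochC (γ+(n:ℂ)) s /
              ((n.factorial : ℂ) * pochC (γ+(n:ℂ)) n * ((p-n).factorial : ℂ) *
                pochC (γ+2*(n:ℂ)+1) (p-n))) := by
        intro n hn
        rw [Finset.mem_Icc] at hn
        obtain ⟨d, hd⟩ : ∃ d, p = n + d := ⟨p - n, by omega⟩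
        subst hd
        rw [hA, hB, hCc]
        simp only [Nat.add_sub_cancel_left]
        rw [show ((n:ℂ) + γ) = γ + (n:ℂ) by ring]
        rw [show (-z)^n = (-1:ℂ)^n * z^n by rw [neg_pow]]
        rw [pow_add z n d]
        ring
      rw [Finset.sum_congr rfl hfac, ← Finset.mul_sum]
      rw [key s p hslt γ
        (fun n hsn hnp => hγ₁ n (by omega))
        (fun n hsn hnp => by
          have h := hγ₂ n (by omega) (p - n) (by omega)
          exact h)]
      rw [mul_zero]
  rw [Finset.sum_congr rfl stepD4]
  rw [Finset.sum_ite_eq' (Finset.range (p+1)) p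
    (fun _ => a p * b p * (z*w) ^ p / (p.factorial : ℂ))]
  rw [if_pos (Finset.self_mem_range_succ p)]
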